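/- arXiv:1607.07840 — 4 statements merged into one kernel-verified Lean document; each statement's English description precedes it below -/
import Mathlib

section
/- Let A be an m×m complex matrix that is asymptotically stable (every eigenvalue of A has negative real part) and let Q be an m×m Hermitian complex matrix. Then the function t ↦ exp(tA) · Q · exp(tA†) is integrable on [0,∞), the matrix P := ∫₀^∞ exp(tA) Q exp(tA†) dt is Hermitian, and P satisfies the Lyapunov equation A·P + P·A† + Q = 0. -/
open MeasureTheory NormedSpace Matrix
open scoped ComplexOrder

namespace LyapAux

variable {m : ℕ}

/-- Eigenvector computation: if `A.mulVec w = ν • w` then `(exp A).mulVec w = exp ν • w`. -/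
theorem exp_mulVec_eigenvector {A : Matrix (Fin m) (Fin m) ℂ} {ν : ℂ} {w : Fin m → ℂ}
    (hw : A.mulVec w = ν • w) : (exp A).mulVec w = Complex.exp ν • w := by
  letI : SeminormedRing (Matrix (Fin m) (Fin m) ℂ) := Matrix.linftyOpSemiNormedRing
  letI : NormedRing (Matrix (Fin m) (Fin m) ℂ) := Matrix.linftyOpNormedRing
  letI : NormedAlgebra ℂ (Matrix (Fin m) (Fin m) ℂ) := Matrix.linftyOpNormedAlgebra
  have hpow : ∀ n : ℕ, (A ^ n).mulVec w = ν ^ n • w := by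
    intro n
    induction n with
    | zero => simp
    | succ n ih =>
      rw [pow_succ', ← Matrix.mulVec_mulVec, ih, Matrix.mulVec_smul, hw, smul_smul, pow_succ,
        mul_comm]
  let L : Matrix (Fin m) (Fin m) ℂ →L[ℂ] (Fin m → ℂ) :=
    LinearMap.toContinuousLinearMap
      { toFun := fun X => X.mulVec w
        map_add' := fun X Y => Matrix.add_mulVec X Y w
        map_smul' := fun c X => Matrix.smul_mulVec c X w }
  have hL : ∀ X : Matrix (Fin m) (Fin m) ℂ, L X = X.mulVec w := fun _ => rfl
  have hsum : Summable fun n : ℕ => ((n.factorial : ℂ)⁻¹) • A ^ n :=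
    expSeries_summable' (𝕂 := ℂ) A
  have h1 : (exp A).mulVec w = ∑' n : ℕ, ((n.factorial : ℂ)⁻¹) • (A ^ n).mulVec w := by
    rw [← hL, exp_eq_tsum ℂ, L.map_tsum hsum]
    refine tsum_congr fun n => ?_
    rw [_root_.map_smul, hL]
  rw [h1]
  have h2 : ∀ n : ℕ, ((n.factorial : ℂ)⁻¹) • (A ^ n).mulVec w
      = (((n.factorial : ℂ)⁻¹) * ν ^ n) • w := by
    intro n; rw [hpow, smul_smul]
  have hsum2 : Summable fun n : ℕ => ((n.factorial : ℂ)⁻¹) * ν ^ n := by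
    simpa [smul_eq_mul] using expSeries_summable' (𝕂 := ℂ) ν
  rw [tsum_congr h2, hsum2.tsum_smul_const]
  congr 1
  rw [Complex.exp_eq_exp_ℂ, exp_eq_tsum ℂ]
  exact tsum_congr fun n => (smul_eq_mul _ _).symm

/-- Spectral mapping: every element of the spectrum of `exp A` is `exp` of an eigenvalue of `A`. -/
theorem spectrum_exp (A : Matrix (Fin m) (Fin m) ℂ) {μ : ℂ}
    (hμ : μ ∈ spectrum ℂ (exp A)) : ∃ ν ∈ spectrum ℂ A, μ = Complex.exp ν := by
  letI : SeminormedRing (Matrix (Fin m) (Fin m) ℂ) := Matrix.linftyOpSemiNormedRing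
  letI : NormedRing (Matrix (Fin m) (Fin m) ℂ) := Matrix.linftyOpNormedRing
  letI : NormedAlgebra ℂ (Matrix (Fin m) (Fin m) ℂ) := Matrix.linftyOpNormedAlgebra
  set f : Module.End ℂ (Fin m → ℂ) := Matrix.toLinAlgEquiv' A with hf
  set g : Module.End ℂ (Fin m → ℂ) := Matrix.toLinAlgEquiv' (exp A) with hg
  have hμg : μ ∈ spectrum ℂ g := by
    rwa [hg, AlgEquiv.spectrum_eq]
  have hev : g.HasEigenvalue μ := Module.End.hasEigenvalue_iff_mem_spectrum.mpr hμg
  set K : Submodule ℂ (Fin m → ℂ) := Module.End.eigenspace g μ with hK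
  have hKne : Nontrivial K := Submodule.nontrivial_iff_ne_bot.mpr hev
  have hcomm : ∀ x, g (f x) = f (g x) := by
    intro x
    have h1 : Commute A (exp A) := (Commute.refl A).exp_right
    have h2 : g * f = f * g := by
      rw [hf, hg, ← _root_.map_mul, ← _root_.map_mul, h1.eq]
    calc g (f x) = (g * f) x := rfl
      _ = (f * g) x := by rw [h2]
      _ = f (g x) := rfl
  have hinv : ∀ x ∈ K, f x ∈ K := by
    intro x hx
    rw [hK, Module.End.mem_eigenspace_iff] at hx ⊢
    rw [hcomm, hx, _root_.map_smul]
  set f' : Module.End ℂ K := f.restrict hinv with hf'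
  obtain ⟨ν, hν⟩ := Module.End.exists_eigenvalue f'
  obtain ⟨w', hw'⟩ := hν.exists_hasEigenvector
  have hw0 : (w' : Fin m → ℂ) ≠ 0 := fun h => hw'.right (Subtype.coe_injective (by simpa using h))
  have hfw : f w' = ν • (w' : Fin m → ℂ) := by
    have h1 := Module.End.mem_eigenspace_iff.mp hw'.left
    have h2 := congrArg Subtype.val h1
    simpa [hf', LinearMap.restrict_apply] using h2
  have hνA : ν ∈ spectrum ℂ A := by
    have h3 : f.HasEigenvalue ν :=
      Module.End.hasEigenvalue_of_hasEigenvector ⟨Module.End.mem_eigenspace_iff.mpr hfw, hw0⟩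
    rw [← AlgEquiv.spectrum_eq (Matrix.toLinAlgEquiv') A]
    exact Module.End.hasEigenvalue_iff_mem_spectrum.mp h3
  refine ⟨ν, hνA, ?_⟩
  have hmul : A.mulVec w' = ν • (w' : Fin m → ℂ) := by
    rw [← hfw, hf]; rfl
  have h3 : (exp A).mulVec w' = Complex.exp ν • (w' : Fin m → ℂ) :=
    exp_mulVec_eigenvector hmul
  have h4 : (exp A).mulVec w' = μ • (w' : Fin m → ℂ) := by
    have h5 := Module.End.mem_eigenspace_iff.mp (w'.2 : (w' : Fin m → ℂ) ∈ K)
    rw [← h5, hg]; rfl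
  have h6 : (μ - Complex.exp ν) • (w' : Fin m → ℂ) = 0 := by
    rw [sub_smul, ← h4, ← h3, sub_self]
  rcases smul_eq_zero.mp h6 with h | h
  · exact sub_eq_zero.mp h
  · exact absurd h hw0

/-- Exponential decay of `exp (t • A)` for an asymptotically stable `A`, entrywise. -/
theorem exp_decay (A : Matrix (Fin m) (Fin m) ℂ)
    (hA : ∀ μ ∈ spectrum ℂ A, μ.re < 0) :
    ∃ C ε : ℝ, 0 < ε ∧ 0 ≤ C ∧ ∀ t : ℝ, 0 ≤ t → ∀ i j : Fin m,
      ‖exp (t • A) i j‖ ≤ C * Real.exp (-(ε * t)) := by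
  letI : SeminormedRing (Matrix (Fin m) (Fin m) ℂ) := Matrix.linftyOpSemiNormedRing
  letI : NormedRing (Matrix (Fin m) (Fin m) ℂ) := Matrix.linftyOpNormedRing
  letI : NormedAlgebra ℂ (Matrix (Fin m) (Fin m) ℂ) := Matrix.linftyOpNormedAlgebra
  letI : NormedAlgebra ℚ (Matrix (Fin m) (Fin m) ℂ) := NormedAlgebra.restrictScalars ℚ ℂ _
  have entry_le : ∀ (M : Matrix (Fin m) (Fin m) ℂ) (i j : Fin m), ‖M i j‖ ≤ ‖M‖ := by
    intro M i j
    rw [Matrix.linfty_opNorm_def]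
    calc ‖M i j‖ ≤ ∑ j' : Fin m, ‖M i j'‖ :=
          Finset.single_le_sum (fun _ _ => norm_nonneg _) (Finset.mem_univ j)
      _ = ((∑ j' : Fin m, ‖M i j'‖₊ : NNReal) : ℝ) := by
          simp [NNReal.coe_sum]
      _ ≤ _ :=
          NNReal.coe_le_coe.mpr
            (Finset.le_sup (f := fun i => ∑ j : Fin m, ‖M i j‖₊) (Finset.mem_univ i))
  obtain ⟨δ, hδpos, hδ⟩ : ∃ δ : ℝ, 0 < δ ∧ ∀ ν ∈ spectrum ℂ A, ν.re ≤ -δ := by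
    rcases Set.eq_empty_or_nonempty (spectrum ℂ A) with h | h
    · exact ⟨1, one_pos, by simp [h]⟩
    · obtain ⟨ν₀, hν₀, hmax⟩ :=
        (spectrum.isCompact A).exists_isMaxOn h Complex.continuous_re.continuousOn
      refine ⟨-ν₀.re, by simpa using hA ν₀ hν₀, fun ν hν => ?_⟩
      simpa using hmax hν
  set r : ℝ := Real.exp (-δ) with hrdef
  have hr0 : 0 < r := Real.exp_pos _
  have hr1 : r < 1 := Real.exp_lt_one_iff.mpr (by linarith)
  set ρ : ℝ := (r + 1) / 2 with hρdef
  have hρ0 : 0 < ρ := by positivity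
  have hρ1 : ρ < 1 := by rw [hρdef]; linarith
  have hrρ : r < ρ := by rw [hρdef]; linarith
  have hsr : spectralRadius ℂ (exp A) ≤ ENNReal.ofReal r := by
    rw [spectralRadius]
    refine iSup₂_le fun μ hμ => ?_
    obtain ⟨ν, hν, rfl⟩ := spectrum_exp A hμ
    rw [← enorm_eq_nnnorm, ← ofReal_norm]
    refine ENNReal.ofReal_le_ofReal ?_
    rw [Complex.norm_exp, hrdef]
    exact Real.exp_le_exp.mpr (hδ ν hν)
  have hlt : spectralRadius ℂ (exp A) < ENNReal.ofReal ρ :=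
    lt_of_le_of_lt hsr ((ENNReal.ofReal_lt_ofReal_iff hρ0).mpr hrρ)
  have hgel := spectrum.pow_nnnorm_pow_one_div_tendsto_nhds_spectralRadius (exp A)
  obtain ⟨N, hN⟩ := Filter.eventually_atTop.mp (hgel.eventually_lt_const hlt)
  set Nr : ℕ := max N 1 with hNr
  have hpowbound : ∀ n : ℕ, Nr ≤ n → ‖exp A ^ n‖ ≤ ρ ^ n := by
    intro n hn
    have hn1 : 1 ≤ n := le_trans (le_max_right N 1) hn
    have hnne : (n : ℝ) ≠ 0 := Nat.cast_ne_zero.mpr (by omega)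
    have h1 := (hN n (le_trans (le_max_left N 1) hn)).le
    have h2 := ENNReal.rpow_le_rpow h1 (Nat.cast_nonneg n : (0:ℝ) ≤ n)
    rw [← ENNReal.rpow_mul, one_div, inv_mul_cancel₀ hnne, ENNReal.rpow_one] at h2
    rw [ENNReal.rpow_natCast, ← ENNReal.ofReal_pow hρ0.le, ← enorm_eq_nnnorm, ← ofReal_norm] at h2
    exact (ENNReal.ofReal_le_ofReal_iff (by positivity)).mp h2
  have hcont : Continuous fun t : ℝ => exp (t • A) :=
    exp_continuous.comp (continuous_id.smul continuous_const)
  obtain ⟨C₁, hC₁⟩ := (isCompact_Icc (a := (0:ℝ)) (b := (Nr + 1 : ℝ))).exists_bound_of_continuousOn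
    hcont.continuousOn
  have hC₁0 : 0 ≤ C₁ := le_trans (norm_nonneg _) (hC₁ 0 ⟨le_refl 0, by positivity⟩)
  set ε : ℝ := -Real.log ρ with hεdef
  have hε : 0 < ε := by rw [hεdef]; simpa using Real.log_neg hρ0 hρ1
  have hρexp : ∀ n : ℕ, ρ ^ n = Real.exp (-(ε * n)) := by
    intro n
    rw [neg_mul, neg_neg, mul_comm, Real.exp_nat_mul, Real.exp_log hρ0]
  refine ⟨C₁ * Real.exp (ε * (Nr + 1)), ε, hε, by positivity, ?_⟩
  intro t ht i j
  refine le_trans (entry_le _ i j) ?_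
  rcases le_or_gt t (Nr + 1) with hcase | hcase
  · have hb : ‖exp (t • A)‖ ≤ C₁ := hC₁ t ⟨ht, hcase⟩
    have h1 : (1:ℝ) ≤ Real.exp (ε * (Nr + 1)) * Real.exp (-(ε * t)) := by
      rw [← Real.exp_add]
      refine Real.one_le_exp ?_
      nlinarith
    calc ‖exp (t • A)‖ ≤ C₁ := hb
      _ = C₁ * 1 := by ring
      _ ≤ C₁ * (Real.exp (ε * (Nr + 1)) * Real.exp (-(ε * t))) :=
          mul_le_mul_of_nonneg_left h1 hC₁0
      _ = C₁ * Real.exp (ε * (Nr + 1)) * Real.exp (-(ε * t)) := by ring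
  · set n : ℕ := ⌊t⌋₊ with hndef
    have hn : Nr ≤ n := Nat.le_floor (by exact_mod_cast by linarith : (Nr:ℝ) ≤ t)
    have hs0 : 0 ≤ t - n := sub_nonneg.mpr (Nat.floor_le ht)
    have hs1 : t - n ≤ 1 := by
      have := Nat.lt_floor_add_one t
      linarith
    have hsplit : exp (t • A) = exp ((t - n) • A) * exp A ^ n := by
      have hco : Commute ((t - n) • A) (((n:ℝ)) • A) :=
        ((Commute.refl A).smul_left (t - (n:ℝ))).smul_right ((n:ℝ))
      have hdecomp : t • A = (t - n) • A + ((n:ℝ)) • A := by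
        rw [← add_smul]; ring_nf
      rw [hdecomp, Matrix.exp_add_of_commute _ _ hco]
      congr 1
      rw [show ((n:ℝ)) • A = (n : ℕ) • A from (Nat.cast_smul_eq_nsmul ℝ n A).symm ▸ rfl]
      exact Matrix.exp_nsmul n A
    have hb1 : ‖exp ((t - n) • A)‖ ≤ C₁ := by
      refine hC₁ _ ⟨hs0, ?_⟩
      have h0 : (0:ℝ) ≤ Nr := Nat.cast_nonneg Nr
      linarith
    have hb2 : ‖exp A ^ n‖ ≤ ρ ^ n := hpowbound n hn
    have hρn : ρ ^ n ≤ Real.exp ε * Real.exp (-(ε * t)) := by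
      rw [hρexp n, ← Real.exp_add]
      refine Real.exp_le_exp.mpr ?_
      have := Nat.lt_floor_add_one t
      nlinarith
    calc ‖exp (t • A)‖ ≤ ‖exp ((t - n) • A)‖ * ‖exp A ^ n‖ := by
          rw [hsplit]; exact norm_mul_le _ _
      _ ≤ C₁ * (Real.exp ε * Real.exp (-(ε * t))) :=
          mul_le_mul hb1 (le_trans hb2 hρn) (norm_nonneg _) hC₁0
      _ = C₁ * Real.exp ε * Real.exp (-(ε * t)) := by ring
      _ ≤ C₁ * Real.exp (ε * (Nr + 1)) * Real.exp (-(ε * t)) := by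
          have h2 : Real.exp ε ≤ Real.exp (ε * (Nr + 1)) := by
            refine Real.exp_le_exp.mpr ?_
            have h0 : (0:ℝ) ≤ Nr := Nat.cast_nonneg Nr
            nlinarith [hε.le]
          exact mul_le_mul_of_nonneg_right (mul_le_mul_of_nonneg_left h2 hC₁0)
            (Real.exp_pos _).le

theorem hasDerivAt_exp_entry (A : Matrix (Fin m) (Fin m) ℂ) (t : ℝ) (i j : Fin m) :
    HasDerivAt (fun u : ℝ => exp (u • A) i j) ((A * exp (t • A)) i j) t := by
  letI : SeminormedRing (Matrix (Fin m) (Fin m) ℂ) := Matrix.linftyOpSemiNormedRing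
  letI : NormedRing (Matrix (Fin m) (Fin m) ℂ) := Matrix.linftyOpNormedRing
  letI : NormedAlgebra ℝ (Matrix (Fin m) (Fin m) ℂ) := Matrix.linftyOpNormedAlgebra
  have h : HasDerivAt (fun u : ℝ => exp (u • A)) (A * exp (t • A)) t :=
    hasDerivAt_exp_smul_const' (𝕂 := ℝ) A t
  let L : Matrix (Fin m) (Fin m) ℂ →L[ℝ] ℂ :=
    LinearMap.toContinuousLinearMap
      { toFun := fun X => X i j
        map_add' := fun X Y => rfl
        map_smul' := fun c X => rfl }
  exact L.hasFDerivAt.comp_hasDerivAt t h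

end LyapAux

attribute [local instance] Matrix.normedAddCommGroup Matrix.normedSpace

/-- A square complex matrix is asymptotically stable if every eigenvalue has
strictly negative real part. -/
def IsAsymptoticallyStable {m : ℕ} (A : Matrix (Fin m) (Fin m) ℂ) : Prop :=
  ∀ μ ∈ spectrum ℂ A, μ.re < 0

/-- For `A` asymptotically stable and `Q` Hermitian, the function
`t ↦ exp(tA) Q exp(tA)ᴴ` is integrable on `[0,∞)`, its integral `P` is Hermitian,
and `P` solves the Lyapunov equation `A P + P Aᴴ + Q = 0`. -/
theorem lyapunov_integral_solution {m : ℕ} (A Q : Matrix (Fin m) (Fin m) ℂ)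
    (hA : IsAsymptoticallyStable A) (hQ : Q.IsHermitian) :
    @IntegrableOn ℝ (Matrix (Fin m) (Fin m) ℂ) _ _ SeminormedAddGroup.toContinuousENorm
      (fun t : ℝ => exp (t • A) * Q * (exp (t • A))ᴴ) (Set.Ici 0) volume ∧
      (∫ t in Set.Ici (0 : ℝ), exp (t • A) * Q * (exp (t • A))ᴴ).IsHermitian ∧
      A * (∫ t in Set.Ici (0 : ℝ), exp (t • A) * Q * (exp (t • A))ᴴ) +
        (∫ t in Set.Ici (0 : ℝ), exp (t • A) * Q * (exp (t • A))ᴴ) * Aᴴ + Q = 0 := by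
  classical
  letI : ContinuousENorm (Matrix (Fin m) (Fin m) ℂ) := SeminormedAddGroup.toContinuousENorm
  letI : TopologicalSpace.PseudoMetrizableSpace (Matrix (Fin m) (Fin m) ℂ) :=
    inferInstanceAs (TopologicalSpace.PseudoMetrizableSpace (Fin m → Fin m → ℂ))
  set E : ℝ → Matrix (Fin m) (Fin m) ℂ := fun t => exp (t • A) with hEdef
  set f : ℝ → Matrix (Fin m) (Fin m) ℂ := fun t => E t * Q * (E t)ᴴ with hfdef
  -- derivative of E
  have hDE : ∀ t : ℝ, HasDerivAt E (A * E t) t := fun t =>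
    hasDerivAt_pi.mpr fun i => hasDerivAt_pi.mpr fun j => LyapAux.hasDerivAt_exp_entry A t i j
  have hEcont : Continuous E :=
    continuous_iff_continuousAt.mpr fun t => (hDE t).continuousAt
  have hfcont : Continuous f :=
    (hEcont.matrix_mul continuous_const).matrix_mul hEcont.matrix_conjTranspose
  -- decay bound
  obtain ⟨C, ε, hε, hC, hdecay⟩ := LyapAux.exp_decay A hA
  set cQ : ℝ := ∑ k : Fin m, ∑ l : Fin m, ‖Q l k‖ with hcQ
  have hcQ0 : 0 ≤ cQ :=
    Finset.sum_nonneg fun _ _ => Finset.sum_nonneg fun _ _ => norm_nonneg _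
  set K : ℝ := C * C * cQ with hK
  have hK0 : 0 ≤ K := by positivity
  have hnb : ∀ t : ℝ, 0 ≤ t → ‖f t‖ ≤ K * Real.exp (-(2 * ε) * t) := by
    intro t ht
    rw [Matrix.norm_le_iff (by positivity)]
    intro i j
    set e : ℝ := Real.exp (-(ε * t)) with he
    have he0 : 0 ≤ e := (Real.exp_pos _).le
    have hentry : (f t) i j = ∑ k : Fin m, ∑ l : Fin m, E t i l * Q l k * star (E t j k) := by
      simp [hfdef, Matrix.mul_apply, Matrix.conjTranspose_apply, Finset.sum_mul]
    calc ‖(f t) i j‖ = ‖∑ k : Fin m, ∑ l : Fin m, E t i l * Q l k * star (E t j k)‖ := by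
          rw [hentry]
      _ ≤ ∑ k : Fin m, ‖∑ l : Fin m, E t i l * Q l k * star (E t j k)‖ := norm_sum_le _ _
      _ ≤ ∑ k : Fin m, ∑ l : Fin m, ‖E t i l * Q l k * star (E t j k)‖ :=
          Finset.sum_le_sum fun k _ => norm_sum_le _ _
      _ ≤ ∑ k : Fin m, ∑ l : Fin m, (C * e) * (C * e) * ‖Q l k‖ := by
          refine Finset.sum_le_sum fun k _ => Finset.sum_le_sum fun l _ => ?_
          rw [norm_mul, norm_mul, norm_star]
          have h1 := hdecay t ht i l
          have h2 := hdecay t ht j k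
          calc ‖E t i l‖ * ‖Q l k‖ * ‖E t j k‖ ≤ (C * e) * ‖Q l k‖ * (C * e) := by
                refine mul_le_mul (mul_le_mul_of_nonneg_right h1 (norm_nonneg _)) h2
                  (norm_nonneg _) (by positivity)
            _ = (C * e) * (C * e) * ‖Q l k‖ := by ring
      _ = (C * e) * (C * e) * cQ := by
          simp_rw [← Finset.mul_sum]; rfl
      _ = K * (e * e) := by rw [hK]; ring
      _ = K * Real.exp (-(2 * ε) * t) := by
          rw [he, ← Real.exp_add]; ring_nf
  -- integrability
  have hgint : IntegrableOn (fun t : ℝ => K * Real.exp (-(2 * ε) * t)) (Set.Ici 0) := by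
    refine Integrable.const_mul ?_ K
    exact Iff.mpr integrableOn_Ici_iff_integrableOn_Ioi (exp_neg_integrableOn_Ioi 0 (by positivity))
  have hint : IntegrableOn f (Set.Ici 0) := by
    refine Integrable.mono' hgint hfcont.aestronglyMeasurable ?_
    filter_upwards [ae_restrict_mem measurableSet_Ici] with t ht
    exact hnb t ht
  -- continuous linear maps
  let Lmul : Matrix (Fin m) (Fin m) ℂ →L[ℝ] Matrix (Fin m) (Fin m) ℂ :=
    LinearMap.toContinuousLinearMap
      { toFun := fun X => A * X
        map_add' := fun X Y => mul_add A X Y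
        map_smul' := fun c X => by simp [mul_smul_comm] }
  let Rmul : Matrix (Fin m) (Fin m) ℂ →L[ℝ] Matrix (Fin m) (Fin m) ℂ :=
    LinearMap.toContinuousLinearMap
      { toFun := fun X => X * Aᴴ
        map_add' := fun X Y => add_mul X Y Aᴴ
        map_smul' := fun c X => by simp [smul_mul_assoc] }
  have hintL : IntegrableOn (fun t => A * f t) (Set.Ici 0) := Lmul.integrable_comp hint
  have hintR : IntegrableOn (fun t => f t * Aᴴ) (Set.Ici 0) := Rmul.integrable_comp hint
  have hintD : IntegrableOn (fun t => A * f t + f t * Aᴴ) (Set.Ici 0) := by have := (Lmul + Rmul).integrable_comp hint; exact this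
  -- tendsto 0 at infinity
  have htend : Filter.Tendsto f Filter.atTop (nhds 0) := by
    have h1 : Filter.Tendsto (fun t : ℝ => K * Real.exp (-(2 * ε) * t)) Filter.atTop (nhds 0) := by
      have h2 : Filter.Tendsto (fun t : ℝ => Real.exp (-(2 * ε * t))) Filter.atTop (nhds 0) :=
        Real.tendsto_exp_neg_atTop_nhds_zero.comp
          (Filter.Tendsto.const_mul_atTop (by positivity) Filter.tendsto_id)
      have h3 := h2.const_mul K
      simpa [neg_mul, mul_assoc] using h3
    refine squeeze_zero_norm' ?_ h1
    filter_upwards [Filter.eventually_ge_atTop (0:ℝ)] with t ht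
    exact hnb t ht
  -- derivative of f
  let B₂ : Matrix (Fin m) (Fin m) ℂ →L[ℝ] Matrix (Fin m) (Fin m) ℂ →L[ℝ]
      Matrix (Fin m) (Fin m) ℂ :=
    LinearMap.toContinuousLinearMap
      { toFun := fun X =>
          LinearMap.toContinuousLinearMap
            { toFun := fun Y => X * Q * Yᴴ
              map_add' := fun Y Z => by
                show X * Q * (Y + Z)ᴴ = X * Q * Yᴴ + X * Q * Zᴴ
                rw [Matrix.conjTranspose_add, mul_add]
              map_smul' := fun c Y => by
                show X * Q * (c • Y)ᴴ = c • (X * Q * Yᴴ)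
                have hcc : (c • Y)ᴴ = c • Yᴴ := by
                  ext i j
                  simp [Matrix.conjTranspose_apply, star_smul]
                rw [hcc, mul_smul_comm] }
        map_add' := fun X X' => by
          ext Y : 1
          show (X + X') * Q * Yᴴ = X * Q * Yᴴ + X' * Q * Yᴴ
          rw [add_mul, add_mul]
        map_smul' := fun c X => by
          ext Y : 1
          show (c • X) * Q * Yᴴ = c • (X * Q * Yᴴ)
          rw [smul_mul_assoc, smul_mul_assoc] }
  have hB₂ : ∀ X Y : Matrix (Fin m) (Fin m) ℂ, B₂ X Y = X * Q * Yᴴ := fun _ _ => rfl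
  have hDf : ∀ t : ℝ, HasDerivAt f (A * f t + f t * Aᴴ) t := by
    intro t
    have h1 : HasDerivAt E (A * E t) t := hDE t
    have hc : HasDerivAt (fun u => B₂ (E u)) (B₂ (A * E t)) t :=
      by
        letI : NormedAddCommGroup (Matrix (Fin m) (Fin m) ℂ →L[ℝ] Matrix (Fin m) (Fin m) ℂ) :=
          ContinuousLinearMap.toNormedAddCommGroup
        letI : NormedSpace ℝ (Matrix (Fin m) (Fin m) ℂ →L[ℝ] Matrix (Fin m) (Fin m) ℂ) :=
          ContinuousLinearMap.toNormedSpace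
        have := (B₂.hasFDerivAt (x := E t)).comp_hasDerivAt t h1; exact this
    have h2 := hc.clm_apply h1
    have h3 : B₂ (A * E t) (E t) + B₂ (E t) (A * E t) = A * f t + f t * Aᴴ := by
      rw [hB₂, hB₂, hfdef]
      simp only [Matrix.conjTranspose_mul, Matrix.mul_assoc]
    rw [← h3]
    exact h2
  -- fundamental theorem of calculus on [0, ∞)
  have hf0 : f 0 = Q := by
    have hE0 : E 0 = 1 := by rw [hEdef]; simp [exp_zero]
    rw [hfdef]
    simp [hE0]
  have key : (∫ t in Set.Ioi (0:ℝ), (A * f t + f t * Aᴴ)) = 0 - f 0 :=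
    MeasureTheory.integral_Ioi_of_hasDerivAt_of_tendsto' (fun x _ => hDf x)
      (hintD.mono_set Set.Ioi_subset_Ici_self) htend
  -- put the pieces together
  set P : Matrix (Fin m) (Fin m) ℂ := ∫ t in Set.Ici (0:ℝ), f t with hP
  have hPIoi : P = ∫ t in Set.Ioi (0:ℝ), f t := MeasureTheory.integral_Ici_eq_integral_Ioi
  have hintLIoi : IntegrableOn (fun t => A * f t) (Set.Ioi 0) :=
    hintL.mono_set Set.Ioi_subset_Ici_self
  have hintRIoi : IntegrableOn (fun t => f t * Aᴴ) (Set.Ioi 0) :=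
    hintR.mono_set Set.Ioi_subset_Ici_self
  have hintIoi : IntegrableOn f (Set.Ioi 0) := hint.mono_set Set.Ioi_subset_Ici_self
  have hAP : A * P = ∫ t in Set.Ioi (0:ℝ), A * f t := by
    rw [hPIoi]
    exact (Lmul.integral_comp_comm hintIoi).symm
  have hPA : P * Aᴴ = ∫ t in Set.Ioi (0:ℝ), f t * Aᴴ := by
    rw [hPIoi]
    exact (Rmul.integral_comp_comm hintIoi).symm
  have hlyap : A * P + P * Aᴴ + Q = 0 := by
    rw [hAP, hPA, ← MeasureTheory.integral_add hintLIoi hintRIoi, key, hf0]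
    simp
  -- Hermitian
  let Lstar : Matrix (Fin m) (Fin m) ℂ →L[ℝ] Matrix (Fin m) (Fin m) ℂ :=
    LinearMap.toContinuousLinearMap
      { toFun := fun X => Xᴴ
        map_add' := fun X Y => Matrix.conjTranspose_add X Y
        map_smul' := fun c X => by
          ext i j
          simp [Matrix.conjTranspose_apply, star_smul] }
  have hherm : P.IsHermitian := by
    have h1 : Pᴴ = ∫ t in Set.Ici (0:ℝ), (f t)ᴴ := by
      have := Lstar.integral_comp_comm hint
      exact this.symm
    have h2 : ∀ t : ℝ, (f t)ᴴ = f t := by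
      intro t
      rw [hfdef]
      simp only [Matrix.conjTranspose_mul, Matrix.conjTranspose_conjTranspose]
      rw [hQ.eq, Matrix.mul_assoc]
    rw [Matrix.IsHermitian, h1]
    simp_rw [h2]; rfl
  exact ⟨hint, hherm, hlyap⟩
end

section
/- Let A be an m×m complex matrix that is asymptotically stable and let Q be an m×m complex matrix. If P₁ and P₂ are m×m complex matrices both satisfying A·Pᵢ + Pᵢ·A† + Q = 0 (i = 1,2), then P₁ = P₂. -/
open Matrix
open Polynomial

lemma charpoly_eval {m : ℕ} (M : Matrix (Fin m) (Fin m) ℂ) (μ : ℂ) :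
    M.charpoly.eval μ = (Matrix.scalar (Fin m) μ - M).det := by
  rw [Matrix.charpoly, _root_.eval_det, matPolyEquiv_charmatrix]
  simp

lemma mem_spectrum_iff_root {m : ℕ} (M : Matrix (Fin m) (Fin m) ℂ) (μ : ℂ) :
    μ ∈ spectrum ℂ M ↔ M.charpoly.IsRoot μ := by
  rw [spectrum.mem_iff, Matrix.isUnit_iff_isUnit_det, isUnit_iff_ne_zero, not_not,
    Polynomial.IsRoot, charpoly_eval, Matrix.scalar_apply, Matrix.algebraMap_eq_diagonal, Pi.algebraMap_def, Algebra.algebraMap_self_apply]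

lemma mem_spectrum_conjTranspose {m : ℕ} (M : Matrix (Fin m) (Fin m) ℂ) (μ : ℂ)
    (h : μ ∈ spectrum ℂ Mᴴ) : (starRingEnd ℂ) μ ∈ spectrum ℂ M := by
  rw [spectrum.mem_iff, Matrix.isUnit_iff_isUnit_det, isUnit_iff_ne_zero, not_not] at h ⊢
  have key : ((algebraMap ℂ (Matrix (Fin m) (Fin m) ℂ)) ((starRingEnd ℂ) μ) - M)ᴴ
      = algebraMap ℂ _ μ - Mᴴ := by
    simp [Matrix.conjTranspose_sub, Matrix.algebraMap_eq_diagonal, Matrix.diagonal_conjTranspose,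
      Function.comp]
  have h2 : star (((algebraMap ℂ (Matrix (Fin m) (Fin m) ℂ)) ((starRingEnd ℂ) μ) - M).det) = 0 := by
    rw [← Matrix.det_conjTranspose, key, h]
  exact star_eq_zero.mp h2

lemma aeval_mul_comm {m : ℕ} (A B X : Matrix (Fin m) (Fin m) ℂ) (h : A * X = X * B)
    (p : ℂ[X]) : (aeval A p) * X = X * (aeval B p) := by
  induction p using Polynomial.induction_on' with
  | add p q hp hq => simp [map_add, add_mul, mul_add, hp, hq]
  | monomial n a =>
    simp only [aeval_monomial]
    have hpow : ∀ k : ℕ, A ^ k * X = X * B ^ k := by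
      intro k
      induction k with
      | zero => simp
      | succ k ih => rw [pow_succ, pow_succ, mul_assoc, h, ← mul_assoc, ih, mul_assoc]
    rw [mul_assoc, hpow n, ← mul_assoc, ← mul_assoc]
    congr 1
    rw [Algebra.commutes]

/-- For `A` asymptotically stable, solutions of the Lyapunov equation
`A P + P Aᴴ + Q = 0` are unique. -/
theorem lyapunov_solution_unique {m : ℕ} (A Q P₁ P₂ : Matrix (Fin m) (Fin m) ℂ)
    (hA : IsAsymptoticallyStable A)
    (h₁ : A * P₁ + P₁ * Aᴴ + Q = 0) (h₂ : A * P₂ + P₂ * Aᴴ + Q = 0) :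
    P₁ = P₂ := by
  rcases Nat.eq_zero_or_pos m with hm | hm
  · subst hm; ext i; exact i.elim0
  set D := P₁ - P₂ with hD
  set B := -Aᴴ with hB
  have hkey : A * D + D * Aᴴ = 0 := by
    have h3 : (A * P₁ + P₁ * Aᴴ + Q) - (A * P₂ + P₂ * Aᴴ + Q) = 0 := by rw [h₁, h₂]; simp
    rw [← h3, hD]; noncomm_ring
  have hsyl : A * D = D * B := by
    rw [hB, mul_neg]
    exact eq_neg_of_add_eq_zero_left hkey
  have hcay : Polynomial.aeval B B.charpoly = 0 := Matrix.aeval_self_charpoly B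
  have hdeg : 0 < B.charpoly.degree := by
    rw [Matrix.charpoly_degree_eq_dim]
    have : (0 : ℕ) < Fintype.card (Fin m) := by simpa using hm
    exact_mod_cast this
  have hunit : IsUnit (Polynomial.aeval A B.charpoly) := by
    rw [← spectrum.zero_notMem_iff ℂ,
      spectrum.map_polynomial_aeval_of_degree_pos A B.charpoly hdeg]
    rintro ⟨μ, hμ, hev⟩
    have hμB : μ ∈ spectrum ℂ B := (mem_spectrum_iff_root B μ).mpr hev
    have hnegμ : -μ ∈ spectrum ℂ Aᴴ := by
      rw [hB, ← spectrum.neg_eq] at hμB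
      exact Set.mem_neg.mp hμB
    have h2 : (starRingEnd ℂ) (-μ) ∈ spectrum ℂ A := mem_spectrum_conjTranspose A _ hnegμ
    have r1 := hA _ h2
    have r2 := hA _ hμ
    simp [Complex.neg_re] at r1
    linarith
  have hzero : (Polynomial.aeval A B.charpoly) * D = 0 := by
    rw [aeval_mul_comm A B D hsyl, hcay, mul_zero]
  have hD0 : D = 0 := hunit.mul_left_cancel (by rw [hzero, mul_zero])
  exact sub_eq_zero.mp hD0
end

section
/- Let A be an m×m complex matrix that is asymptotically stable, Q an m×m Hermitian complex matrix, P = P(Q,A) the integral solution of the Lyapunov equation A·P + P·A† + Q = 0, and let Ξ be any m×m Hermitian complex matrix. If the Hermitian matrix Q_[Ξ] := Q − Ξ·A† − A·Ξ is positive semidefinite, then P + Ξ is positive semidefinite. -/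
open MeasureTheory NormedSpace Matrix
open scoped ComplexOrder
open scoped Nat

set_option synthInstance.maxHeartbeats 1000000
set_option maxHeartbeats 1600000

attribute [local instance] Matrix.normedAddCommGroup Matrix.normedSpace

/-- The integral solution `P(Q,A) = ∫₀^∞ exp(tA) Q exp(tA)ᴴ dt` of the Lyapunov
equation `A P + P Aᴴ + Q = 0`. -/
noncomputable def lyapunovSolution {m : ℕ} (Q A : Matrix (Fin m) (Fin m) ℂ) :
    Matrix (Fin m) (Fin m) ℂ :=
  ∫ t in Set.Ici (0 : ℝ), exp (t • A) * Q * (exp (t • A))ᴴ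

namespace LyapunovAux

variable {m : ℕ}

noncomputable instance matContinuousENorm : ContinuousENorm (Matrix (Fin m) (Fin m) ℂ) :=
  SeminormedAddGroup.toContinuousENorm

instance matPseudoMetrizable : TopologicalSpace.PseudoMetrizableSpace (Matrix (Fin m) (Fin m) ℂ) :=
  inferInstanceAs (TopologicalSpace.PseudoMetrizableSpace (Fin m → Fin m → ℂ))

lemma norm_matrix_one_le : ‖(1 : Matrix (Fin m) (Fin m) ℂ)‖ ≤ 1 := by
  rw [Matrix.norm_le_iff zero_le_one]
  intro i j
  rcases eq_or_ne i j with h | h <;> simp [Matrix.one_apply, h]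

lemma norm_matrix_mul_le (X Y : Matrix (Fin m) (Fin m) ℂ) :
    ‖X * Y‖ ≤ (m : ℝ) * ‖X‖ * ‖Y‖ := by
  rw [Matrix.norm_le_iff (by positivity)]
  intro i j
  calc ‖(X * Y) i j‖ = ‖∑ k, X i k * Y k j‖ := by rw [Matrix.mul_apply]
    _ ≤ ∑ k, ‖X i k * Y k j‖ := norm_sum_le _ _
    _ ≤ ∑ _k : Fin m, ‖X‖ * ‖Y‖ := by
        refine Finset.sum_le_sum fun k _ => ?_
        rw [norm_mul]
        exact mul_le_mul (Matrix.norm_entry_le_entrywise_sup_norm X)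
          (Matrix.norm_entry_le_entrywise_sup_norm Y) (norm_nonneg _) (norm_nonneg _)
    _ = (m : ℝ) * ‖X‖ * ‖Y‖ := by simp [Finset.sum_const, mul_assoc]

lemma norm_matrix_pow_le (X : Matrix (Fin m) (Fin m) ℂ) (n : ℕ) :
    ‖X ^ n‖ ≤ max 1 ((m : ℝ) * ‖X‖) ^ n := by
  induction n with
  | zero => simpa using norm_matrix_one_le
  | succ n ih =>
      rw [pow_succ, pow_succ]
      calc ‖X ^ n * X‖ ≤ (m : ℝ) * ‖X ^ n‖ * ‖X‖ := norm_matrix_mul_le _ _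
        _ = ‖X ^ n‖ * ((m : ℝ) * ‖X‖) := by ring
        _ ≤ max 1 ((m : ℝ) * ‖X‖) ^ n * max 1 ((m : ℝ) * ‖X‖) := by
            exact mul_le_mul ih (le_max_right _ _) (by positivity) (by positivity)

lemma summable_expSeries (X : Matrix (Fin m) (Fin m) ℂ) :
    Summable fun n : ℕ => ((((n)! : ℂ))⁻¹ • X ^ n) := by
  refine Summable.of_norm_bounded (g := fun n => max 1 ((m : ℝ) * ‖X‖) ^ n / (n)!)
    (Real.summable_pow_div_factorial _) fun n => ?_
  rw [norm_smul]
  have h1 : ‖(((n)! : ℂ))⁻¹‖ = ((n)! : ℝ)⁻¹ := by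
    rw [norm_inv]
    norm_num
  rw [h1]
  simp only [div_eq_inv_mul]
  exact mul_le_mul_of_nonneg_left (norm_matrix_pow_le X n) (by positivity)

/-- `M ↦ M *ᵥ x` as a continuous linear map. -/
noncomputable def mulVecCLM (x : Fin m → ℂ) :
    Matrix (Fin m) (Fin m) ℂ →L[ℂ] (Fin m → ℂ) :=
  LinearMap.toContinuousLinearMap
    { toFun := fun M => M *ᵥ x
      map_add' := fun M N => Matrix.add_mulVec M N x
      map_smul' := fun c M => Matrix.smul_mulVec c M x }

@[simp] lemma mulVecCLM_apply (x : Fin m → ℂ) (M : Matrix (Fin m) (Fin m) ℂ) :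
    mulVecCLM x M = M *ᵥ x := rfl

lemma exp_mulVec (M : Matrix (Fin m) (Fin m) ℂ) (x : Fin m → ℂ) :
    exp M *ᵥ x = ∑' n : ℕ, (((n)! : ℂ))⁻¹ • (M ^ n *ᵥ x) := by
  have h := (mulVecCLM x).map_tsum (summable_expSeries M)
  simp only [mulVecCLM_apply, _root_.map_smul] at h
  rw [exp_eq_tsum ℂ]
  simpa [Matrix.smul_mulVec] using h

lemma exp_mulVec_of_nilpotent {N : Matrix (Fin m) (Fin m) ℂ} {x : Fin m → ℂ} {k : ℕ}
    (h : N ^ k *ᵥ x = 0) (c : ℂ) :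
    exp (c • N) *ᵥ x
      = ∑ n ∈ Finset.range k, ((c ^ n * ((n)! : ℂ)⁻¹)) • (N ^ n *ᵥ x) := by
  rw [exp_mulVec]
  have hz : ∀ n ∉ Finset.range k, ((((n)! : ℂ))⁻¹) • ((c • N) ^ n *ᵥ x) = 0 := by
    intro n hn
    rw [Finset.mem_range, not_lt] at hn
    have : N ^ n *ᵥ x = 0 := by
      have : N ^ n = N ^ (n - k) * N ^ k := by rw [← pow_add]; congr 1; omega
      rw [this, ← Matrix.mulVec_mulVec, h, Matrix.mulVec_zero]
    rw [smul_pow, Matrix.smul_mulVec, this, smul_zero, smul_zero]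
  rw [tsum_eq_sum hz]
  refine Finset.sum_congr rfl fun n _ => ?_
  rw [smul_pow, Matrix.smul_mulVec, smul_smul, mul_comm]


lemma smul_one_diag (c : ℂ) :
    c • (1 : Matrix (Fin m) (Fin m) ℂ) = Matrix.diagonal (fun _ => c) := by
  ext i j
  rcases eq_or_ne i j with h | h <;> simp [Matrix.one_apply, h, Matrix.diagonal, h]

lemma exp_smul_one (c : ℂ) :
    exp (c • (1 : Matrix (Fin m) (Fin m) ℂ)) = Complex.exp c • 1 := by
  rw [smul_one_diag, Matrix.exp_diagonal, smul_one_diag]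
  congr 1
  funext i
  rw [Pi.exp_def]
  rw [← Complex.exp_eq_exp_ℂ]

lemma real_smul_matrix (t : ℝ) (M : Matrix (Fin m) (Fin m) ℂ) :
    t • M = (t : ℂ) • M := by
  ext i j
  simp [Complex.real_smul]

lemma exp_split (A : Matrix (Fin m) (Fin m) ℂ) (μ : ℂ) (t : ℝ) :
    exp (t • A)
      = Complex.exp (t * μ) • exp ((t : ℂ) • (A - μ • 1)) := by
  have h : t • A = ((t : ℂ) * μ) • (1 : Matrix (Fin m) (Fin m) ℂ)
      + (t : ℂ) • (A - μ • 1) := by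
    rw [real_smul_matrix, smul_sub, smul_smul, ← add_sub_assoc, add_sub_cancel_left]
  rw [h, Matrix.exp_add_of_commute _ _ ((Commute.one_left _).smul_left _),
    exp_smul_one, smul_mul_assoc, one_mul]

lemma pow_le_factorial_mul_exp {ε : ℝ} (hε : 0 < ε) (n : ℕ) {t : ℝ} (ht : 0 ≤ t) :
    t ^ n ≤ (n)! * ε⁻¹ ^ n * Real.exp (ε * t) := by
  have hfac : (0 : ℝ) < (n)! := by positivity
  have key : (ε * t) ^ n / (n)! ≤ Real.exp (ε * t) := by
    calc (ε * t) ^ n / (n)!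
        ≤ ∑ i ∈ Finset.range (n + 1), (ε * t) ^ i / (i)! := by
          refine Finset.single_le_sum (f := fun i => (ε * t) ^ i / (i)!) ?_
            (Finset.self_mem_range_succ n)
          intro i _
          positivity
      _ ≤ Real.exp (ε * t) := Real.sum_le_exp_of_nonneg (by positivity) _
  have h2 : (ε * t) ^ n ≤ Real.exp (ε * t) * (n)! := (div_le_iff₀ hfac).mp key
  have h3 : t ^ n = (ε * t) ^ n * ε⁻¹ ^ n := by
    rw [mul_pow, mul_comm (ε ^ n), mul_assoc, ← mul_pow, mul_inv_cancel₀ hε.ne', one_pow, mul_one]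
  rw [h3]
  calc (ε * t) ^ n * ε⁻¹ ^ n ≤ (Real.exp (ε * t) * (n)!) * ε⁻¹ ^ n := by
        exact mul_le_mul_of_nonneg_right h2 (by positivity)
    _ = (n)! * ε⁻¹ ^ n * Real.exp (ε * t) := by ring


lemma vec_decay (A : Matrix (Fin m) (Fin m) ℂ) (hA : IsAsymptoticallyStable A)
    (x : Fin m → ℂ) :
    ∃ ε C : ℝ, 0 < ε ∧ 0 ≤ C ∧ ∀ t : ℝ, 0 ≤ t →
      ‖exp (t • A) *ᵥ x‖ ≤ C * Real.exp (-(ε * t)) := by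
  let S : Submodule ℂ (Fin m → ℂ) :=
    { carrier := {x | ∃ ε C : ℝ, 0 < ε ∧ 0 ≤ C ∧ ∀ t : ℝ, 0 ≤ t →
        ‖exp (t • A) *ᵥ x‖ ≤ C * Real.exp (-(ε * t))}
      add_mem' := by
        rintro a b ⟨ε₁, C₁, hε₁, hC₁, h₁⟩ ⟨ε₂, C₂, hε₂, hC₂, h₂⟩
        refine ⟨min ε₁ ε₂, C₁ + C₂, lt_min hε₁ hε₂, by positivity, fun t ht => ?_⟩
        rw [Matrix.mulVec_add]
        calc ‖exp (t • A) *ᵥ a + exp (t • A) *ᵥ b‖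
            ≤ ‖exp (t • A) *ᵥ a‖ + ‖exp (t • A) *ᵥ b‖ := norm_add_le _ _
          _ ≤ C₁ * Real.exp (-(ε₁ * t)) + C₂ * Real.exp (-(ε₂ * t)) :=
              add_le_add (h₁ t ht) (h₂ t ht)
          _ ≤ C₁ * Real.exp (-(min ε₁ ε₂ * t)) + C₂ * Real.exp (-(min ε₁ ε₂ * t)) := by
              gcongr <;> [exact min_le_left _ _; exact min_le_right _ _]
          _ = (C₁ + C₂) * Real.exp (-(min ε₁ ε₂ * t)) := by ring
      zero_mem' := ⟨1, 0, one_pos, le_rfl, fun t ht => by simp [Matrix.mulVec_zero]⟩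
      smul_mem' := by
        rintro c a ⟨ε, C, hε, hC, h⟩
        refine ⟨ε, ‖c‖ * C, hε, by positivity, fun t ht => ?_⟩
        rw [Matrix.mulVec_smul, norm_smul, mul_assoc]
        exact mul_le_mul_of_nonneg_left (h t ht) (norm_nonneg c) }
  suffices hS : ⊤ ≤ S from hS (Submodule.mem_top)
  rw [← Module.End.iSup_maxGenEigenspace_eq_top (Matrix.toLinAlgEquiv' A)]
  refine iSup_le fun μ => ?_
  intro y hy
  rw [Module.End.mem_maxGenEigenspace] at hy
  obtain ⟨k, hk⟩ := hy
  have hk' : (A - μ • 1) ^ k *ᵥ y = 0 := by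
    have e1 : (Matrix.toLinAlgEquiv' A - μ • 1) ^ k
        = Matrix.toLinAlgEquiv' ((A - μ • 1) ^ k) := by
      rw [map_pow, map_sub, _root_.map_smul, _root_.map_one]
    rw [e1] at hk
    exact hk
  rcases eq_or_ne y 0 with rfl | hy0
  · exact S.zero_mem
  have hμ : μ ∈ spectrum ℂ A := by
    by_contra hns
    rw [spectrum.notMem_iff] at hns
    have hunit : IsUnit ((A - μ • 1) ^ k) := by
      have e2 : A - μ • 1 = -(algebraMap ℂ (Matrix (Fin m) (Fin m) ℂ) μ - A) := by
        rw [Algebra.algebraMap_eq_smul_one, neg_sub]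
      rw [e2]
      exact hns.neg.pow k
    obtain ⟨u, hu⟩ := hunit
    apply hy0
    calc y = 1 *ᵥ y := (Matrix.one_mulVec y).symm
      _ = ((↑u⁻¹ : Matrix (Fin m) (Fin m) ℂ) * (A - μ • 1) ^ k) *ᵥ y := by
          rw [← hu, Units.inv_mul]
      _ = (↑u⁻¹ : Matrix (Fin m) (Fin m) ℂ) *ᵥ ((A - μ • 1) ^ k *ᵥ y) :=
          (Matrix.mulVec_mulVec _ _ _).symm
      _ = 0 := by rw [hk', Matrix.mulVec_zero]
  have hre : μ.re < 0 := hA μ hμ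
  set N : Matrix (Fin m) (Fin m) ℂ := A - μ • 1 with hN
  set ε : ℝ := -μ.re / 2 with hεdef
  have hεpos : 0 < ε := by simp only [hεdef]; linarith
  refine ⟨ε, ∑ n ∈ Finset.range k, ε⁻¹ ^ n * ‖N ^ n *ᵥ y‖, hεpos, by positivity, ?_⟩
  intro t ht
  rw [exp_split A μ t, Matrix.smul_mulVec, norm_smul, exp_mulVec_of_nilpotent hk']
  have habs : ‖Complex.exp (↑t * μ)‖ = Real.exp (t * μ.re) := by
    rw [Complex.norm_exp]
    congr 1
    simp [Complex.mul_re]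
  rw [habs]
  calc Real.exp (t * μ.re)
        * ‖∑ n ∈ Finset.range k, ((t : ℂ) ^ n * ((n)! : ℂ)⁻¹) • (N ^ n *ᵥ y)‖
      ≤ Real.exp (t * μ.re)
        * ∑ n ∈ Finset.range k, ‖((t : ℂ) ^ n * ((n)! : ℂ)⁻¹) • (N ^ n *ᵥ y)‖ := by
        exact mul_le_mul_of_nonneg_left (norm_sum_le _ _) (Real.exp_nonneg _)
    _ = ∑ n ∈ Finset.range k,
          Real.exp (t * μ.re) * (t ^ n * ((n)! : ℝ)⁻¹ * ‖N ^ n *ᵥ y‖) := by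
        rw [Finset.mul_sum]
        refine Finset.sum_congr rfl fun n _ => ?_
        congr 1
        rw [norm_smul, norm_mul, norm_pow, norm_inv]
        simp [Complex.norm_real, abs_of_nonneg ht,
          Complex.norm_natCast, mul_assoc]
    _ ≤ ∑ n ∈ Finset.range k, (ε⁻¹ ^ n * ‖N ^ n *ᵥ y‖) * Real.exp (-(ε * t)) := by
        refine Finset.sum_le_sum fun n _ => ?_
        have hp := pow_le_factorial_mul_exp hεpos n ht
        have hfac : (0:ℝ) < ((n)! : ℝ) := by positivity
        have hmu : t * μ.re = -(ε * t) + -(ε * t) := by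
          rw [hεdef]; ring
        rw [hmu, Real.exp_add]
        have hnn : (0:ℝ) ≤ ‖N ^ n *ᵥ y‖ := norm_nonneg _
        have h1 : t ^ n * ((n)! : ℝ)⁻¹ ≤ ε⁻¹ ^ n * Real.exp (ε * t) := by
          calc t ^ n * ((n)! : ℝ)⁻¹ = t ^ n / ((n)! : ℝ) := by ring
            _ ≤ (n)! * ε⁻¹ ^ n * Real.exp (ε * t) / ((n)! : ℝ) := by
                gcongr
            _ = ε⁻¹ ^ n * Real.exp (ε * t) := by
                field_simp
        calc Real.exp (-(ε * t)) * Real.exp (-(ε * t))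
              * (t ^ n * ((n)! : ℝ)⁻¹ * ‖N ^ n *ᵥ y‖)
            ≤ Real.exp (-(ε * t)) * Real.exp (-(ε * t))
              * (ε⁻¹ ^ n * Real.exp (ε * t) * ‖N ^ n *ᵥ y‖) := by
              have := mul_le_mul_of_nonneg_right h1 hnn
              exact mul_le_mul_of_nonneg_left this (by positivity)
          _ = (ε⁻¹ ^ n * ‖N ^ n *ᵥ y‖)
              * (Real.exp (-(ε * t)) * (Real.exp (-(ε * t)) * Real.exp (ε * t))) := by
              ring
          _ = (ε⁻¹ ^ n * ‖N ^ n *ᵥ y‖) * Real.exp (-(ε * t)) := by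
              rw [← Real.exp_add, neg_add_cancel, Real.exp_zero, mul_one]
    _ = (∑ n ∈ Finset.range k, ε⁻¹ ^ n * ‖N ^ n *ᵥ y‖) * Real.exp (-(ε * t)) := by
        rw [Finset.sum_mul]


lemma mulVec_single_entry (M : Matrix (Fin m) (Fin m) ℂ) (i j : Fin m) :
    (M *ᵥ Pi.single j 1) i = M i j := by
  simp [Matrix.mulVec, dotProduct, Pi.single_apply]

lemma mat_decay (A : Matrix (Fin m) (Fin m) ℂ) (hA : IsAsymptoticallyStable A) :
    ∃ ε C : ℝ, 0 < ε ∧ 0 ≤ C ∧ ∀ t : ℝ, 0 ≤ t →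
      ‖exp (t • A)‖ ≤ C * Real.exp (-(ε * t)) := by
  by_cases hm : Nonempty (Fin m)
  · choose εf Cf hεf hCf hbound using fun j => vec_decay A hA (Pi.single j (1 : ℂ))
    have hne : (Finset.univ : Finset (Fin m)).Nonempty := Finset.univ_nonempty
    set ε := Finset.univ.inf' hne εf with hεdef
    set C := Finset.univ.sup' hne Cf with hCdef
    have hεpos : 0 < ε := (Finset.lt_inf'_iff hne).mpr fun j _ => hεf j
    have hεle : ∀ j, ε ≤ εf j := fun j => Finset.inf'_le _ (Finset.mem_univ j)
    have hCle : ∀ j, Cf j ≤ C := fun j => Finset.le_sup' _ (Finset.mem_univ j)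
    have hC0 : 0 ≤ C := le_trans (hCf (Classical.arbitrary _)) (hCle _)
    refine ⟨ε, C, hεpos, hC0, fun t ht => ?_⟩
    rw [Matrix.norm_le_iff (by positivity)]
    intro i j
    calc ‖exp (t • A) i j‖ = ‖(exp (t • A) *ᵥ Pi.single j 1) i‖ := by
          rw [mulVec_single_entry]
      _ ≤ ‖exp (t • A) *ᵥ Pi.single j 1‖ := norm_le_pi_norm _ i
      _ ≤ Cf j * Real.exp (-(εf j * t)) := hbound j t ht
      _ ≤ C * Real.exp (-(ε * t)) := by
          refine mul_le_mul (hCle j) (Real.exp_le_exp.mpr ?_) (Real.exp_nonneg _) hC0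
          have := mul_le_mul_of_nonneg_right (hεle j) ht
          linarith
  · refine ⟨1, 0, one_pos, le_rfl, fun t ht => ?_⟩
    have h0 : ‖exp (t • A)‖ ≤ 0 := by
      rw [Matrix.norm_le_iff le_rfl]
      intro i
      exact absurd ⟨i⟩ hm
    calc ‖exp (t • A)‖ ≤ 0 := h0
      _ ≤ 0 * Real.exp (-(1 * t)) := by simp
      _ = 0 * Real.exp (-(1 * t)) := rfl

section Phi

/-- The star-algebra equivalence with continuous linear endomorphisms of Euclidean space. -/
noncomputable abbrev Phi (m : ℕ) := Matrix.toEuclideanCLM (𝕜 := ℂ) (n := Fin m)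

lemma Phi_continuous : Continuous (Phi m) := by
  let L : Matrix (Fin m) (Fin m) ℂ →ₗ[ℂ]
      (EuclideanSpace ℂ (Fin m) →L[ℂ] EuclideanSpace ℂ (Fin m)) :=
    { toFun := Phi m
      map_add' := fun M N => map_add _ M N
      map_smul' := fun c M => _root_.map_smul _ c M }
  exact L.continuous_of_finiteDimensional

lemma PhiSymm_continuous : Continuous (Phi m).symm := by
  let L : (EuclideanSpace ℂ (Fin m) →L[ℂ] EuclideanSpace ℂ (Fin m)) →ₗ[ℂ]
      Matrix (Fin m) (Fin m) ℂ :=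
    { toFun := (Phi m).symm
      map_add' := fun M N => map_add _ M N
      map_smul' := fun c M => _root_.map_smul _ c M }
  exact L.continuous_of_finiteDimensional

/-- `(Phi m).symm` as a `ℂ`-linear map. -/
noncomputable def PhiSymmL : (EuclideanSpace ℂ (Fin m) →L[ℂ] EuclideanSpace ℂ (Fin m)) →ₗ[ℂ]
    Matrix (Fin m) (Fin m) ℂ :=
  { toFun := (Phi m).symm
    map_add' := fun M N => map_add _ M N
    map_smul' := fun c M => _root_.map_smul _ c M }

/-- `(Phi m).symm` as a continuous `ℝ`-linear map. -/
noncomputable def PhiSymmCLM : (EuclideanSpace ℂ (Fin m) →L[ℂ] EuclideanSpace ℂ (Fin m)) →L[ℝ]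
    Matrix (Fin m) (Fin m) ℂ :=
  (LinearMap.toContinuousLinearMap (PhiSymmL (m := m))).restrictScalars ℝ

@[simp] lemma PhiSymmCLM_apply (M : EuclideanSpace ℂ (Fin m) →L[ℂ] EuclideanSpace ℂ (Fin m)) :
    (PhiSymmCLM (m := m)) M = (Phi m).symm M := rfl

set_option maxHeartbeats 1000000 in
lemma Phi_exp (M : Matrix (Fin m) (Fin m) ℂ) :
    Phi m (exp M) = exp (Phi m M) := by
  letI : SeminormedRing (Matrix (Fin m) (Fin m) ℂ) := Matrix.linftyOpSemiNormedRing
  letI N : NormedRing (Matrix (Fin m) (Fin m) ℂ) := Matrix.linftyOpNormedRing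
  letI : NormedAlgebra ℂ (Matrix (Fin m) (Fin m) ℂ) := Matrix.linftyOpNormedAlgebra
  letI : NormedAlgebra ℚ (Matrix (Fin m) (Fin m) ℂ) := NormedAlgebra.restrictScalars ℚ ℂ _
  letI : @CompleteSpace (Matrix (Fin m) (Fin m) ℂ)
      (PseudoMetricSpace.toUniformSpace (self := N.toPseudoMetricSpace)) :=
    FiniteDimensional.complete ℂ _
  exact map_exp (Phi m) Phi_continuous M

lemma Phi_real_smul (t : ℝ) (M : Matrix (Fin m) (Fin m) ℂ) :
    Phi m (t • M) = t • Phi m M := by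
  rw [← algebraMap_smul ℂ t M, _root_.map_smul (Phi m), algebraMap_smul]

lemma Phi_exp_smul (t : ℝ) (M : Matrix (Fin m) (Fin m) ℂ) :
    exp (t • Phi m M) = Phi m (exp (t • M)) := by
  rw [Phi_exp, Phi_real_smul]

end Phi

lemma conjTranspose_real_smul (t : ℝ) (M : Matrix (Fin m) (Fin m) ℂ) :
    (t • M)ᴴ = t • Mᴴ := by
  ext i j
  simp [Matrix.conjTranspose_apply]

lemma exp_smul_conjTranspose (t : ℝ) (A : Matrix (Fin m) (Fin m) ℂ) :
    exp (t • Aᴴ) = (exp (t • A))ᴴ := by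
  rw [← conjTranspose_real_smul, Matrix.exp_conjTranspose]

set_option maxHeartbeats 1000000 in
lemma hasDerivAt_conjFlow (A R : Matrix (Fin m) (Fin m) ℂ) (t : ℝ) :
    HasDerivAt (fun s : ℝ => exp (s • A) * R * (exp (s • A))ᴴ)
      (exp (t • A) * (A * R + R * Aᴴ) * (exp (t • A))ᴴ) t := by
  classical
  set B := Phi m A with hB
  set S := Phi m R with hS
  set B' := Phi m Aᴴ with hB'
  have hB'star : B' = star B := by rw [hB', hB, ← map_star, Matrix.star_eq_conjTranspose]
  -- derivatives downstairs
  have hu : HasDerivAt (fun s : ℝ => exp (s • B)) (B * exp (t • B)) t := by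
    have h := hasDerivAt_exp_smul_const' (𝕂 := ℝ) B t
    exact h
  have hv : HasDerivAt (fun s : ℝ => exp (s • B')) (B' * exp (t • B')) t := by
    have h := hasDerivAt_exp_smul_const' (𝕂 := ℝ) B' t
    exact h
  have hG : HasDerivAt (fun s : ℝ => exp (s • B) * S * exp (s • B'))
      ((B * exp (t • B) * S) * exp (t • B')
        + (exp (t • B) * S) * (B' * exp (t • B'))) t :=
    (hu.mul_const S).mul hv
  -- commutation
  have hsmul : ∀ X : EuclideanSpace ℂ (Fin m) →L[ℂ] EuclideanSpace ℂ (Fin m),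
      t • X = ((t : ℂ)) • X := fun X => by
    rw [← algebraMap_smul ℂ t X, Complex.coe_algebraMap]
  have hcB : B * exp (t • B) = exp (t • B) * B := by
    rw [hsmul B]
    exact (((Commute.refl B).smul_right ((t : ℂ))).exp_right)
  have hcB' : B' * exp (t • B') = exp (t • B') * B' := by
    rw [hsmul B']
    exact (((Commute.refl B').smul_right ((t : ℂ))).exp_right)
  -- push through Φ⁻¹
  have hΨ := (PhiSymmCLM (m := m)).hasFDerivAt.comp_hasDerivAt t hG
  have hfun : (fun s : ℝ => PhiSymmCLM (m := m) (exp (s • B) * S * exp (s • B')))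
      = fun s : ℝ => exp (s • A) * R * (exp (s • A))ᴴ := by
    funext s
    simp only [PhiSymmCLM_apply, hB, hB', hS, Phi_exp_smul, _root_.map_mul,
      StarAlgEquiv.symm_apply_apply, exp_smul_conjTranspose]
  have hval : PhiSymmCLM (m := m)
        ((B * exp (t • B) * S) * exp (t • B')
          + (exp (t • B) * S) * (B' * exp (t • B')))
      = exp (t • A) * (A * R + R * Aᴴ) * (exp (t • A))ᴴ := by
    rw [PhiSymmCLM_apply]
    have e1 : (B * exp (t • B) * S) * exp (t • B')
          + (exp (t • B) * S) * (B' * exp (t • B'))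
        = exp (t • B) * (B * S + S * B') * exp (t • B') := by
      rw [hcB]
      noncomm_ring
    rw [e1]
    simp only [hB, hB', hS, Phi_exp_smul, _root_.map_mul, _root_.map_add,
      StarAlgEquiv.symm_apply_apply, exp_smul_conjTranspose]
  simp only [Function.comp_def] at hΨ
  exact cast (congrArg₂ (fun f f' => HasDerivAt f f' t) hfun hval) hΨ

lemma conjFlow_continuous (A R : Matrix (Fin m) (Fin m) ℂ) :
    Continuous fun t : ℝ => exp (t • A) * R * (exp (t • A))ᴴ :=
  continuous_iff_continuousAt.mpr fun t => (hasDerivAt_conjFlow A R t).continuousAt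

lemma norm_conjFlow_le (A R : Matrix (Fin m) (Fin m) ℂ) {ε C : ℝ} (hC : 0 ≤ C)
    (hb : ∀ t : ℝ, 0 ≤ t → ‖exp (t • A)‖ ≤ C * Real.exp (-(ε * t))) {t : ℝ} (ht : 0 ≤ t) :
    ‖exp (t • A) * R * (exp (t • A))ᴴ‖
      ≤ ((m : ℝ) * (m : ℝ) * ‖R‖ * C * C) * Real.exp (-(2 * ε) * t) := by
  have hexp2 : Real.exp (-(ε * t)) * Real.exp (-(ε * t)) = Real.exp (-(2 * ε) * t) := by
    rw [← Real.exp_add]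
    ring_nf
  calc ‖exp (t • A) * R * (exp (t • A))ᴴ‖
      ≤ (m : ℝ) * ‖exp (t • A) * R‖ * ‖(exp (t • A))ᴴ‖ := norm_matrix_mul_le _ _
    _ = (m : ℝ) * ‖exp (t • A) * R‖ * ‖exp (t • A)‖ := by
        rw [Matrix.norm_conjTranspose]
    _ ≤ (m : ℝ) * ((m : ℝ) * ‖exp (t • A)‖ * ‖R‖) * ‖exp (t • A)‖ := by
        gcongr
        exact norm_matrix_mul_le _ _
    _ = ((m : ℝ) * (m : ℝ) * ‖R‖) * (‖exp (t • A)‖ * ‖exp (t • A)‖) := by ring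
    _ ≤ ((m : ℝ) * (m : ℝ) * ‖R‖)
        * ((C * Real.exp (-(ε * t))) * (C * Real.exp (-(ε * t)))) := by
        refine mul_le_mul_of_nonneg_left ?_ (by positivity)
        exact mul_le_mul (hb t ht) (hb t ht) (norm_nonneg _) (by positivity)
    _ = ((m : ℝ) * (m : ℝ) * ‖R‖ * C * C)
        * (Real.exp (-(ε * t)) * Real.exp (-(ε * t))) := by ring
    _ = ((m : ℝ) * (m : ℝ) * ‖R‖ * C * C) * Real.exp (-(2 * ε) * t) := by rw [hexp2]

lemma integrableOn_conjFlow (A R : Matrix (Fin m) (Fin m) ℂ)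
    (hA : IsAsymptoticallyStable A) :
    IntegrableOn (fun t : ℝ => exp (t • A) * R * (exp (t • A))ᴴ) (Set.Ici (0:ℝ)) := by
  obtain ⟨ε, C, hε, hC, hb⟩ := mat_decay A hA
  have hdom : IntegrableOn
      (fun t : ℝ => ((m : ℝ) * (m : ℝ) * ‖R‖ * C * C) * Real.exp (-(2 * ε) * t))
      (Set.Ici (0:ℝ)) := by
    refine Integrable.const_mul ?_ _
    exact Iff.mpr integrableOn_Ici_iff_integrableOn_Ioi
      (exp_neg_integrableOn_Ioi 0 (by positivity))
  refine Integrable.mono' hdom ((conjFlow_continuous A R).aestronglyMeasurable) ?_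
  refine (ae_restrict_iff' measurableSet_Ici).mpr (Filter.Eventually.of_forall fun t ht => ?_)
  exact norm_conjFlow_le A R hC hb ht

lemma tendsto_conjFlow_zero (A R : Matrix (Fin m) (Fin m) ℂ)
    (hA : IsAsymptoticallyStable A) :
    Filter.Tendsto (fun t : ℝ => exp (t • A) * R * (exp (t • A))ᴴ)
      Filter.atTop (nhds 0) := by
  obtain ⟨ε, C, hε, hC, hb⟩ := mat_decay A hA
  have hg : Filter.Tendsto
      (fun t : ℝ => ((m : ℝ) * (m : ℝ) * ‖R‖ * C * C) * Real.exp (-(2 * ε) * t))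
      Filter.atTop (nhds 0) := by
    have h1 : Filter.Tendsto (fun t : ℝ => 2 * ε * t) Filter.atTop Filter.atTop :=
      Filter.Tendsto.const_mul_atTop (by positivity) Filter.tendsto_id
    have h2 : Filter.Tendsto (fun t : ℝ => Real.exp (-(2 * ε * t))) Filter.atTop (nhds 0) :=
      Real.tendsto_exp_neg_atTop_nhds_zero.comp h1
    have h3 := h2.const_mul ((m : ℝ) * (m : ℝ) * ‖R‖ * C * C)
    simpa [neg_mul, mul_assoc] using h3
  refine squeeze_zero_norm' ?_ hg
  filter_upwards [Filter.eventually_ge_atTop (0:ℝ)] with t ht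
  exact norm_conjFlow_le A R hC hb ht

lemma integral_conjFlow_shift (A Ξ : Matrix (Fin m) (Fin m) ℂ)
    (hA : IsAsymptoticallyStable A) :
    ∫ t in Set.Ici (0:ℝ), exp (t • A) * (A * Ξ + Ξ * Aᴴ) * (exp (t • A))ᴴ = -Ξ := by
  rw [MeasureTheory.integral_Ici_eq_integral_Ioi]
  have hint : IntegrableOn
      (fun t : ℝ => exp (t • A) * (A * Ξ + Ξ * Aᴴ) * (exp (t • A))ᴴ) (Set.Ioi (0:ℝ)) :=
    (integrableOn_conjFlow A _ hA).mono_set Set.Ioi_subset_Ici_self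
  have h := integral_Ioi_of_hasDerivAt_of_tendsto'
    (f := fun t : ℝ => exp (t • A) * Ξ * (exp (t • A))ᴴ)
    (f' := fun t : ℝ => exp (t • A) * (A * Ξ + Ξ * Aᴴ) * (exp (t • A))ᴴ)
    (a := 0) (m := 0)
    (fun t _ => hasDerivAt_conjFlow A Ξ t) hint (tendsto_conjFlow_zero A Ξ hA)
  rw [h]
  simp [zero_smul, exp_zero, Matrix.conjTranspose_one]

lemma posSemidef_integral {g : ℝ → Matrix (Fin m) (Fin m) ℂ}
    (hint : IntegrableOn g (Set.Ici (0:ℝ)))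
    (hg : ∀ t ∈ Set.Ici (0:ℝ), (g t).PosSemidef) :
    (∫ t in Set.Ici (0:ℝ), g t).PosSemidef := by
  refine posSemidef_iff_dotProduct_mulVec.mpr ⟨?_, ?_⟩
  · -- Hermitian part
    let L : Matrix (Fin m) (Fin m) ℂ →ₗ[ℝ] Matrix (Fin m) (Fin m) ℂ :=
      { toFun := fun M => Mᴴ
        map_add' := fun M N => Matrix.conjTranspose_add M N
        map_smul' := fun r M => by
          ext i j
          simp [Matrix.conjTranspose_apply] }
    let Lc : Matrix (Fin m) (Fin m) ℂ →L[ℝ] Matrix (Fin m) (Fin m) ℂ :=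
      LinearMap.toContinuousLinearMap L
    have hcomm := Lc.integral_comp_comm hint
    calc (∫ t in Set.Ici (0:ℝ), g t)ᴴ = Lc (∫ t in Set.Ici (0:ℝ), g t) := rfl
      _ = ∫ t in Set.Ici (0:ℝ), Lc (g t) := hcomm.symm
      _ = ∫ t in Set.Ici (0:ℝ), g t := by
          refine setIntegral_congr_fun measurableSet_Ici fun t ht => ?_
          exact (hg t ht).1
  · intro x
    let q : Matrix (Fin m) (Fin m) ℂ →ₗ[ℂ] ℂ :=
      { toFun := fun M => dotProduct (star x) (M *ᵥ x)
        map_add' := fun M N => by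
          show star x ⬝ᵥ ((M + N) *ᵥ x) = star x ⬝ᵥ (M *ᵥ x) + star x ⬝ᵥ (N *ᵥ x)
          rw [Matrix.add_mulVec, dotProduct_add]
        map_smul' := fun c M => by
          show star x ⬝ᵥ ((c • M) *ᵥ x) = (RingHom.id ℂ) c • (star x ⬝ᵥ (M *ᵥ x))
          rw [Matrix.smul_mulVec, dotProduct_smul, RingHom.id_apply] }
    let qc : Matrix (Fin m) (Fin m) ℂ →L[ℂ] ℂ := LinearMap.toContinuousLinearMap q
    have hq := qc.integral_comp_comm hint
    have hint' : Integrable (fun t => qc (g t)) (volume.restrict (Set.Ici (0:ℝ))) :=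
      qc.integrable_comp hint
    have hgoal : star x ⬝ᵥ ((∫ t in Set.Ici (0:ℝ), g t) *ᵥ x)
        = ∫ t in Set.Ici (0:ℝ), qc (g t) := hq.symm
    rw [hgoal]
    have hnn : ∀ t ∈ Set.Ici (0:ℝ), 0 ≤ qc (g t) := fun t ht => (hg t ht).dotProduct_mulVec_nonneg x
    rw [Complex.nonneg_iff]
    constructor
    · rw [← RCLike.re_to_complex, ← integral_re hint']
      refine setIntegral_nonneg measurableSet_Ici fun t ht => ?_
      have h := (Complex.nonneg_iff.mp (hnn t ht)).1
      simpa using h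
    · have himeq : (∫ t in Set.Ici (0:ℝ), RCLike.im (qc (g t)) : ℝ) = 0 := by
        rw [setIntegral_congr_fun (g := fun _ => (0:ℝ)) measurableSet_Ici ?_, integral_zero]
        intro t ht
        have h := (Complex.nonneg_iff.mp (hnn t ht)).2
        simpa using h.symm
      rw [← RCLike.im_to_complex, ← integral_im hint', himeq]

end LyapunovAux

/-- If `A` is asymptotically stable, `Q` and `Ξ` are Hermitian, and
`Q_[Ξ] := Q − Ξ Aᴴ − A Ξ` is positive semidefinite, then `P(Q,A) + Ξ` is
positive semidefinite. -/
theorem lyapunovSolution_add_posSemidef {m : ℕ} (A Q Ξ : Matrix (Fin m) (Fin m) ℂ)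
    (hA : IsAsymptoticallyStable A) (hQ : Q.IsHermitian) (hΞ : Ξ.IsHermitian)
    (hshift : (Q - Ξ * Aᴴ - A * Ξ).PosSemidef) :
    (lyapunovSolution Q A + Ξ).PosSemidef := by
  have hintQ := LyapunovAux.integrableOn_conjFlow A Q hA
  have hintS := LyapunovAux.integrableOn_conjFlow A (A * Ξ + Ξ * Aᴴ) hA
  have hkey := LyapunovAux.integral_conjFlow_shift A Ξ hA
  have hsplit : lyapunovSolution Q A + Ξ
      = ∫ t in Set.Ici (0:ℝ), exp (t • A) * (Q - Ξ * Aᴴ - A * Ξ) * (exp (t • A))ᴴ := by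
    have hpt : ∀ t : ℝ, exp (t • A) * (Q - Ξ * Aᴴ - A * Ξ) * (exp (t • A))ᴴ
        = exp (t • A) * Q * (exp (t • A))ᴴ
          - exp (t • A) * (A * Ξ + Ξ * Aᴴ) * (exp (t • A))ᴴ := by
      intro t
      noncomm_ring
    rw [lyapunovSolution]
    calc (∫ t in Set.Ici (0:ℝ), exp (t • A) * Q * (exp (t • A))ᴴ) + Ξ
        = (∫ t in Set.Ici (0:ℝ), exp (t • A) * Q * (exp (t • A))ᴴ) - (-Ξ) := by
          rw [sub_neg_eq_add]
      _ = (∫ t in Set.Ici (0:ℝ), exp (t • A) * Q * (exp (t • A))ᴴ)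
          - ∫ t in Set.Ici (0:ℝ),
              exp (t • A) * (A * Ξ + Ξ * Aᴴ) * (exp (t • A))ᴴ := by
          rw [hkey]
      _ = ∫ t in Set.Ici (0:ℝ),
            (exp (t • A) * Q * (exp (t • A))ᴴ
              - exp (t • A) * (A * Ξ + Ξ * Aᴴ) * (exp (t • A))ᴴ) :=
          (integral_sub hintQ hintS).symm
      _ = ∫ t in Set.Ici (0:ℝ),
            exp (t • A) * (Q - Ξ * Aᴴ - A * Ξ) * (exp (t • A))ᴴ := by
          refine setIntegral_congr_fun measurableSet_Ici fun t _ => ?_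
          exact (hpt t).symm
  rw [hsplit]
  exact LyapunovAux.posSemidef_integral (LyapunovAux.integrableOn_conjFlow A _ hA)
    (fun t _ => hshift.mul_mul_conjTranspose_same _)
end

section
/- Let M be a 2n×2n real symmetric positive definite matrix and let J be the 2n×2n standard symplectic form [[0, I_n],[−I_n, 0]]. Then every eigenvalue of the matrix J·M (over ℂ) is purely imaginary and nonzero, and the set of eigenvalues is closed under complex conjugation (eigenvalues occur in pairs ±iμ with μ > 0). -/
open Matrix

/-- The `2n × 2n` standard symplectic form `J = [[0, Iₙ], [−Iₙ, 0]]`. -/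
noncomputable def symplecticJ (n : ℕ) : Matrix (Fin n ⊕ Fin n) (Fin n ⊕ Fin n) ℝ :=
  Matrix.fromBlocks 0 1 (-1) 0

section Aux

variable {m : Type*} [Fintype m]

/-- real part of a complex quadratic form of a real matrix. -/
lemma re_dot_map (M : Matrix m m ℝ) (v : m → ℂ) :
    (star v ⬝ᵥ (M.map Complex.ofReal) *ᵥ v).re
      = (fun i => (v i).re) ⬝ᵥ M *ᵥ (fun i => (v i).re)
        + (fun i => (v i).im) ⬝ᵥ M *ᵥ (fun i => (v i).im) := by
  simp only [dotProduct, mulVec, map_apply, Pi.star_apply, Finset.mul_sum]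
  rw [Complex.re_sum, ← Finset.sum_add_distrib]
  refine Finset.sum_congr rfl fun i _ => ?_
  rw [Complex.re_sum, ← Finset.sum_add_distrib]
  refine Finset.sum_congr rfl fun j _ => ?_
  simp only [Complex.star_def, Complex.mul_re, Complex.mul_im, Complex.conj_re, Complex.conj_im,
    Complex.ofReal_re, Complex.ofReal_im]
  ring

lemma star_dot_form (B : Matrix m m ℂ) (v : m → ℂ) :
    star (star v ⬝ᵥ B *ᵥ v) = star v ⬝ᵥ Bᴴ *ᵥ v := by
  rw [star_dotProduct, star_mulVec, star_star, dotProduct_mulVec]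

end Aux

/-- For a real symmetric positive definite `2n × 2n` matrix `M`, every eigenvalue of
`J M` over `ℂ` is purely imaginary and nonzero, and the spectrum is closed under
complex conjugation. -/
theorem spectrum_J_mul_posDef (n : ℕ) (M : Matrix (Fin n ⊕ Fin n) (Fin n ⊕ Fin n) ℝ)
    (hM : M.PosDef) :
    ∀ μ ∈ spectrum ℂ ((symplecticJ n * M).map Complex.ofReal),
      μ.re = 0 ∧ μ ≠ 0 ∧
        (starRingEnd ℂ) μ ∈ spectrum ℂ ((symplecticJ n * M).map Complex.ofReal) := by
  classical
  intro μ hμ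
  set A : Matrix (Fin n ⊕ Fin n) (Fin n ⊕ Fin n) ℂ := (symplecticJ n * M).map Complex.ofReal
    with hA
  set Jc : Matrix (Fin n ⊕ Fin n) (Fin n ⊕ Fin n) ℂ := (symplecticJ n).map Complex.ofReal
    with hJc
  set Mc : Matrix (Fin n ⊕ Fin n) (Fin n ⊕ Fin n) ℂ := M.map Complex.ofReal with hMc
  have hmap : A = Jc * Mc := Matrix.map_mul (f := Complex.ofRealHom)
  -- determinant of J is a unit
  have hJJ : symplecticJ n * (-(symplecticJ n)) = 1 := by
    simp [symplecticJ, Matrix.fromBlocks_multiply, Matrix.fromBlocks_neg, ← Matrix.fromBlocks_one]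
  have hdetJ : (symplecticJ n).det ≠ 0 := by
    have : (symplecticJ n).det * (-(symplecticJ n)).det = 1 := by
      rw [← Matrix.det_mul, hJJ, Matrix.det_one]
    exact left_ne_zero_of_mul_eq_one this
  have hdetA : A.det ≠ 0 := by
    have h1 : A.det = ((symplecticJ n * M).det : ℂ) :=
      (RingHom.map_det Complex.ofRealHom (symplecticJ n * M)).symm
    rw [h1, Matrix.det_mul]
    simp only [ne_eq, Complex.ofReal_eq_zero, Complex.ofReal_mul]
    exact mul_ne_zero (by exact_mod_cast hdetJ) (by exact_mod_cast ne_of_gt hM.det_pos)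
  have hAunit : IsUnit A := by
    rw [Matrix.isUnit_iff_isUnit_det, isUnit_iff_ne_zero]
    exact hdetA
  -- eigenvector
  have hμ' := hμ
  rw [spectrum.mem_iff, Matrix.isUnit_iff_isUnit_det, isUnit_iff_ne_zero, not_ne_iff] at hμ'
  obtain ⟨v, hv0, hv⟩ := (Matrix.exists_mulVec_eq_zero_iff).mpr hμ'
  have hAv : A *ᵥ v = μ • v := by
    have h1 : (algebraMap ℂ (Matrix (Fin n ⊕ Fin n) (Fin n ⊕ Fin n) ℂ) μ) *ᵥ v = μ • v := by
      rw [Algebra.algebraMap_eq_smul_one, Matrix.smul_mulVec, Matrix.one_mulVec]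
    rw [Matrix.sub_mulVec, h1, sub_eq_zero] at hv
    exact hv.symm
  -- the quadratic form value c := v* M v
  set c : ℂ := star v ⬝ᵥ Mc *ᵥ v with hc
  have hMcherm : Mc.IsHermitian := hM.isHermitian.map Complex.ofReal
    (by intro x; simp [Complex.star_def, Complex.conj_ofReal])
  have hcconj : star c = c := by
    rw [hc, star_dot_form, hMcherm.eq]
  have hcim : c.im = 0 := by
    have := congrArg Complex.im hcconj
    simp only [Complex.star_def, Complex.conj_im] at this
    linarith
  have hcre : 0 < c.re := by
    rw [hc, re_dot_map]
    set a : (Fin n ⊕ Fin n) → ℝ := fun i => (v i).re with ha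
    set b : (Fin n ⊕ Fin n) → ℝ := fun i => (v i).im with hb
    have hab : a ≠ 0 ∨ b ≠ 0 := by
      by_contra h
      push_neg at h
      apply hv0
      funext i
      have h1 := congrFun h.1 i
      have h2 := congrFun h.2 i
      simp only [ha, hb, Pi.zero_apply] at h1 h2
      exact Complex.ext h1 h2
    rcases hab with h | h
    · have h1 : 0 < star a ⬝ᵥ M *ᵥ a := hM.dotProduct_mulVec_pos h
      have h2 : 0 ≤ star b ⬝ᵥ M *ᵥ b := hM.posSemidef.dotProduct_mulVec_nonneg b
      simp only [star_trivial] at h1 h2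
      linarith
    · have h1 : 0 ≤ star a ⬝ᵥ M *ᵥ a := hM.posSemidef.dotProduct_mulVec_nonneg a
      have h2 : 0 < star b ⬝ᵥ M *ᵥ b := hM.dotProduct_mulVec_pos h
      simp only [star_trivial] at h1 h2
      linarith
  -- the skew form value z := v* M J M v = μ c
  have hJskew : Jcᴴ = -Jc := by
    ext i j
    rcases i with i | i <;> rcases j with j | j <;>
      simp [hJc, symplecticJ, Matrix.conjTranspose_apply, Matrix.map_apply, Matrix.one_apply,
        eq_comm]
  set z : ℂ := star v ⬝ᵥ (Mc * Jc * Mc) *ᵥ v with hz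
  have hzval : z = μ * c := by
    have hJMv : Jc *ᵥ (Mc *ᵥ v) = μ • v := by
      rw [Matrix.mulVec_mulVec, ← hmap, hAv]
    rw [hz, ← Matrix.mulVec_mulVec, ← Matrix.mulVec_mulVec, hJMv]
    rw [Matrix.mulVec_smul, dotProduct_smul, hc]
    simp [smul_eq_mul]
  have hzskew : star z = -z := by
    rw [hz, star_dot_form]
    have : (Mc * Jc * Mc)ᴴ = -(Mc * Jc * Mc) := by
      rw [Matrix.conjTranspose_mul, Matrix.conjTranspose_mul, hJskew, hMcherm.eq]
      noncomm_ring
    rw [this]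
    simp [Matrix.neg_mulVec]
  have hzre : z.re = 0 := by
    have := congrArg Complex.re hzskew
    simp only [Complex.star_def, Complex.conj_re, Complex.neg_re] at this
    linarith
  -- purely imaginary
  have hre : μ.re = 0 := by
    have : (μ * c).re = 0 := by rw [← hzval]; exact hzre
    rw [Complex.mul_re, hcim, mul_zero, sub_zero] at this
    exact (mul_eq_zero.mp this).resolve_right (ne_of_gt hcre)
  refine ⟨hre, ?_, ?_⟩
  · rintro rfl
    exact (spectrum.zero_notMem_iff ℂ).mpr hAunit hμ
  · -- conjugation
    rw [spectrum.mem_iff, Matrix.isUnit_iff_isUnit_det, isUnit_iff_ne_zero, not_ne_iff]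
    have key : (algebraMap ℂ (Matrix (Fin n ⊕ Fin n) (Fin n ⊕ Fin n) ℂ) ((starRingEnd ℂ) μ) - A)
        = (algebraMap ℂ (Matrix (Fin n ⊕ Fin n) (Fin n ⊕ Fin n) ℂ) μ - A).map (starRingEnd ℂ) := by
      ext i j
      simp only [Matrix.sub_apply, Matrix.map_apply, Matrix.algebraMap_matrix_apply, hA,
        map_sub, apply_ite (starRingEnd ℂ), map_zero, Complex.conj_ofReal,
        Algebra.algebraMap_self, RingHom.id_apply]
    rw [key]
    have h2 : ((algebraMap ℂ (Matrix (Fin n ⊕ Fin n) (Fin n ⊕ Fin n) ℂ) μ - A).map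
        (starRingEnd ℂ)).det = (starRingEnd ℂ) ((algebraMap ℂ
        (Matrix (Fin n ⊕ Fin n) (Fin n ⊕ Fin n) ℂ) μ - A).det) :=
      (RingHom.map_det (starRingEnd ℂ) _).symm
    rw [h2, hμ', map_zero]
end
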